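/- arXiv:2210.17273 — 3 statements merged into one kernel-verified Lean document; each statement's English description precedes it below -/
import Mathlib

section
/- Let M : ℝ → Matrix (Fin 2) (Fin 2) ℝ be continuous with M(t) symmetric for all t, and let J₁, J₂ : ℝ → ℝ² be twice continuously differentiable curves satisfying the Jacobi equation J''(t) = −M(t)J(t). Then the bracket [J₁,J₂](t) = ξ₁(t)η₂(t) − ξ₂(t)η₁(t) satisfies, for every t, d²/dt² [J₁,J₂](t) = −(trace M(t))·[J₁,J₂](t) + 2[J₁',J₂'](t). -/
/-- The bracket of two plane curves: the determinant of the 2×2 matrix with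
columns `J₁ t` and `J₂ t`. -/
noncomputable def bracket (J₁ J₂ : ℝ → Fin 2 → ℝ) (t : ℝ) : ℝ :=
  J₁ t 0 * J₂ t 1 - J₂ t 0 * J₁ t 1

lemma deriv_apply' {g : ℝ → Fin 2 → ℝ} (hg : Differentiable ℝ g) (t : ℝ) (i : Fin 2) :
    deriv (fun s => g s i) t = deriv g t i :=
  ((hasDerivAt_pi.mp (hg t).hasDerivAt) i).deriv

lemma second_deriv_comp {M : ℝ → Matrix (Fin 2) (Fin 2) ℝ}
    {J : ℝ → Fin 2 → ℝ} (hJ : ContDiff ℝ 2 J)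
    (hJeq : ∀ t, deriv (deriv J) t = -((M t).mulVec (J t)))
    (t : ℝ) (i : Fin 2) :
    deriv (deriv (fun s => J s i)) t = -((M t).mulVec (J t)) i := by
  have hJd : Differentiable ℝ J := hJ.differentiable (by norm_num)
  have hdJ : ContDiff ℝ 1 (deriv J) := by
    have h2 : ContDiff ℝ ((1 : ℕ) + 1) J := by exact_mod_cast hJ
    exact (contDiff_succ_iff_deriv.mp h2).2.2
  have h1 : (fun s => deriv (fun u => J u i) s) = fun s => deriv J s i :=
    funext fun s => deriv_apply' hJd s i
  rw [show deriv (fun s => J s i) = fun s => deriv J s i from h1,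
    deriv_apply' (hdJ.differentiable (by norm_num)) t i, hJeq t]; rfl

/-- If `J₁, J₂` are C² solutions of the Jacobi equation `J'' = -M(t)J` with `M`
continuous and symmetric, then
`d²/dt² [J₁,J₂] = -(trace M)·[J₁,J₂] + 2[J₁',J₂']`. -/
theorem bracket_second_deriv
    (M : ℝ → Matrix (Fin 2) (Fin 2) ℝ) (hM : Continuous M)
    (hMsymm : ∀ t, (M t).IsSymm)
    (J₁ J₂ : ℝ → Fin 2 → ℝ)
    (hJ₁ : ContDiff ℝ 2 J₁) (hJ₂ : ContDiff ℝ 2 J₂)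
    (hJ₁eq : ∀ t, deriv (deriv J₁) t = -((M t).mulVec (J₁ t)))
    (hJ₂eq : ∀ t, deriv (deriv J₂) t = -((M t).mulVec (J₂ t))) :
    ∀ t : ℝ, deriv (deriv (bracket J₁ J₂)) t =
      -(Matrix.trace (M t)) * bracket J₁ J₂ t
        + 2 * bracket (deriv J₁) (deriv J₂) t := by
  intro t
  have hJ₁d : Differentiable ℝ J₁ := hJ₁.differentiable (by norm_num)
  have hJ₂d : Differentiable ℝ J₂ := hJ₂.differentiable (by norm_num)
  -- components
  have hc₁ : ∀ i, ContDiff ℝ 2 (fun s => J₁ s i) := fun i => (contDiff_pi.mp hJ₁) i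
  have hc₂ : ∀ i, ContDiff ℝ 2 (fun s => J₂ s i) := fun i => (contDiff_pi.mp hJ₂) i
  have hd₁ : ∀ i, Differentiable ℝ (fun s => J₁ s i) := fun i => (hc₁ i).differentiable (by norm_num)
  have hd₂ : ∀ i, Differentiable ℝ (fun s => J₂ s i) := fun i => (hc₂ i).differentiable (by norm_num)
  have hdd₁ : ∀ i, Differentiable ℝ (deriv (fun s => J₁ s i)) := by
    intro i
    have h2 : ContDiff ℝ ((1 : ℕ) + 1) (fun s => J₁ s i) := by exact_mod_cast hc₁ i
    exact ((contDiff_succ_iff_deriv.mp h2).2.2).differentiable (by norm_num)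
  have hdd₂ : ∀ i, Differentiable ℝ (deriv (fun s => J₂ s i)) := by
    intro i
    have h2 : ContDiff ℝ ((1 : ℕ) + 1) (fun s => J₂ s i) := by exact_mod_cast hc₂ i
    exact ((contDiff_succ_iff_deriv.mp h2).2.2).differentiable (by norm_num)
  -- first derivative of the bracket
  have hB' : ∀ s, HasDerivAt (bracket J₁ J₂)
      (deriv (fun u => J₁ u 0) s * J₂ s 1 + J₁ s 0 * deriv (fun u => J₂ u 1) s
        - (deriv (fun u => J₂ u 0) s * J₁ s 1 + J₂ s 0 * deriv (fun u => J₁ u 1) s)) s := by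
    intro s
    exact (((hd₁ 0 s).hasDerivAt.mul (hd₂ 1 s).hasDerivAt).sub
      ((hd₂ 0 s).hasDerivAt.mul (hd₁ 1 s).hasDerivAt))
  have hBderiv : deriv (bracket J₁ J₂) = fun s =>
      deriv (fun u => J₁ u 0) s * J₂ s 1 + J₁ s 0 * deriv (fun u => J₂ u 1) s
        - (deriv (fun u => J₂ u 0) s * J₁ s 1 + J₂ s 0 * deriv (fun u => J₁ u 1) s) :=
    funext fun s => (hB' s).deriv
  -- second derivative
  have hB'' : HasDerivAt (deriv (bracket J₁ J₂))
      (deriv (deriv (fun u => J₁ u 0)) t * J₂ t 1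
        + deriv (fun u => J₁ u 0) t * deriv (fun u => J₂ u 1) t
        + (deriv (fun u => J₁ u 0) t * deriv (fun u => J₂ u 1) t
          + J₁ t 0 * deriv (deriv (fun u => J₂ u 1)) t)
        - (deriv (deriv (fun u => J₂ u 0)) t * J₁ t 1
          + deriv (fun u => J₂ u 0) t * deriv (fun u => J₁ u 1) t
          + (deriv (fun u => J₂ u 0) t * deriv (fun u => J₁ u 1) t
            + J₂ t 0 * deriv (deriv (fun u => J₁ u 1)) t))) t := by
    rw [hBderiv]
    exact ((((hdd₁ 0 t).hasDerivAt.mul (hd₂ 1 t).hasDerivAt).add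
      ((hd₁ 0 t).hasDerivAt.mul (hdd₂ 1 t).hasDerivAt)).sub
      (((hdd₂ 0 t).hasDerivAt.mul (hd₁ 1 t).hasDerivAt).add
      ((hd₂ 0 t).hasDerivAt.mul (hdd₁ 1 t).hasDerivAt)))
  rw [hB''.deriv]
  rw [second_deriv_comp hJ₁ hJ₁eq t 0, second_deriv_comp hJ₁ hJ₁eq t 1,
    second_deriv_comp hJ₂ hJ₂eq t 0, second_deriv_comp hJ₂ hJ₂eq t 1]
  have hsym : M t 1 0 = M t 0 1 := (hMsymm t).apply 0 1
  simp only [bracket, deriv_apply' hJ₁d, deriv_apply' hJ₂d,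
    Matrix.trace_fin_two, Matrix.mulVec, dotProduct, Fin.sum_univ_two,
    Pi.neg_apply, hsym]
  ring
end

section
/- Let M : ℝ → Matrix (Fin 2) (Fin 2) ℝ be continuous with M(t) symmetric for all t, and let J : ℝ → ℝ² be a twice continuously differentiable curve satisfying the Jacobi equation J''(t) = −M(t)J(t) that is not identically zero. If J(t₀) = 0 at some point t₀, then there exists δ > 0 such that J(t) ≠ 0 whenever 0 < |t − t₀| < δ; that is, the zeroes of a nontrivial Jacobi field are isolated. -/
open Set Filter Topology

/-- The zeroes of a nontrivial Jacobi field are isolated: if `J` is a C² solution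
of `J'' = -M(t)J` (with `M` continuous and symmetric) that is not identically zero
and `J t₀ = 0`, then `J` does not vanish on some punctured neighbourhood of `t₀`. -/
theorem jacobi_field_zeros_isolated
    (M : ℝ → Matrix (Fin 2) (Fin 2) ℝ) (hM : Continuous M)
    (hMsymm : ∀ t, (M t).IsSymm)
    (J : ℝ → Fin 2 → ℝ) (hJ : ContDiff ℝ 2 J)
    (hJeq : ∀ t, deriv (deriv J) t = -((M t).mulVec (J t)))
    (hJne : ¬ ∀ t : ℝ, J t = 0)
    (t₀ : ℝ) (h0 : J t₀ = 0) :
    ∃ δ > 0, ∀ t : ℝ, 0 < |t - t₀| → |t - t₀| < δ → J t ≠ 0 := by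
  have hJ2 : ContDiff ℝ (1 + 1) J := by exact_mod_cast hJ
  rw [contDiff_succ_iff_deriv] at hJ2
  have hJdiff : Differentiable ℝ J := hJ2.1
  have hJ'diff : Differentiable ℝ (deriv J) := hJ2.2.2.differentiable one_ne_zero
  have key : ∀ (A : Matrix (Fin 2) (Fin 2) ℝ) (x : Fin 2 → ℝ),
      ‖A.mulVec x‖ ≤ (∑ i, ∑ j, |A i j|) * ‖x‖ := by
    intro A x
    have hN : 0 ≤ (∑ i, ∑ j, |A i j|) * ‖x‖ :=
      mul_nonneg (Finset.sum_nonneg fun i _ => Finset.sum_nonneg fun j _ => abs_nonneg _)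
        (norm_nonneg _)
    rw [pi_norm_le_iff_of_nonneg hN]
    intro i
    calc ‖A.mulVec x i‖ = |∑ j, A i j * x j| := rfl
      _ ≤ ∑ j, |A i j * x j| :=
          Finset.abs_sum_le_sum_abs (fun j => A i j * x j) Finset.univ
      _ ≤ ∑ j, |A i j| * ‖x‖ := by
          apply Finset.sum_le_sum
          intro j _
          rw [abs_mul]
          exact mul_le_mul_of_nonneg_left (norm_le_pi_norm x j) (abs_nonneg _)
      _ = (∑ j, |A i j|) * ‖x‖ := by rw [Finset.sum_mul]
      _ ≤ (∑ i, ∑ j, |A i j|) * ‖x‖ := by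
          apply mul_le_mul_of_nonneg_right _ (norm_nonneg _)
          exact Finset.single_le_sum (f := fun k => ∑ j, |A k j|)
            (fun k _ => Finset.sum_nonneg fun j _ => abs_nonneg _) (Finset.mem_univ i)
  by_cases hd : deriv J t₀ = 0
  · -- then J ≡ 0 by uniqueness, contradiction
    exfalso
    apply hJne
    intro t
    set b : ℝ := |t - t₀| + 1 with hb
    have hbpos : (0:ℝ) < b := by positivity
    set a : ℝ := t₀ - b with ha
    set c : ℝ := t₀ + b with hc
    have hac : a ≤ c := by rw [ha, hc]; linarith
    set p : ℝ → ℝ := fun s => min (max s a) c with hp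
    have hpIcc : ∀ s, p s ∈ Icc a c := fun s =>
      ⟨le_min (le_max_right _ _) hac, min_le_right _ _⟩
    have hpeq : ∀ s ∈ Icc a c, p s = s := by
      intro s hs
      simp [p, max_eq_left hs.1, min_eq_left hs.2]
    have hNcont : Continuous fun s => ∑ i, ∑ j, |M s i j| := by
      apply continuous_finset_sum
      intro i _
      apply continuous_finset_sum
      intro j _
      exact (hM.matrix_elem i j).abs
    obtain ⟨C, hC⟩ := (isCompact_Icc (a := a) (b := c)).exists_bound_of_continuousOn
      hNcont.continuousOn
    have hC0 : 0 ≤ C := le_trans (norm_nonneg _) (hC a ⟨le_rfl, hac⟩)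
    set K : NNReal := ⟨max C 1, le_trans zero_le_one (le_max_right _ _)⟩ with hK
    have hKC : C ≤ (K : ℝ) := le_max_left _ _
    have hK1 : (1:ℝ) ≤ (K : ℝ) := le_max_right _ _
    set v : ℝ → (Fin 2 → ℝ) × (Fin 2 → ℝ) → (Fin 2 → ℝ) × (Fin 2 → ℝ) :=
      fun s y => (y.2, -(M (p s)).mulVec y.1) with hv
    have hlip : ∀ s, LipschitzOnWith K (v s) univ := by
      intro s
      apply LipschitzWith.lipschitzOnWith
      apply LipschitzWith.of_dist_le_mul
      intro y z
      have hfst : dist y.1 z.1 ≤ dist y z := by rw [Prod.dist_eq]; exact le_max_left _ _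
      have hsnd : dist y.2 z.2 ≤ dist y z := by rw [Prod.dist_eq]; exact le_max_right _ _
      rw [Prod.dist_eq]
      apply max_le
      · calc dist (v s y).1 (v s z).1 = dist y.2 z.2 := rfl
          _ ≤ dist y z := hsnd
          _ = 1 * dist y z := (one_mul _).symm
          _ ≤ K * dist y z := mul_le_mul_of_nonneg_right hK1 dist_nonneg
      · have h1 : dist (v s y).2 (v s z).2 = ‖(M (p s)).mulVec (z.1 - y.1)‖ := by
          rw [dist_eq_norm]
          show ‖-(M (p s)).mulVec y.1 - -(M (p s)).mulVec z.1‖ = _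
          rw [neg_sub_neg, ← Matrix.mulVec_sub]
        have hCp : (∑ i, ∑ j, |M (p s) i j|) ≤ C :=
          le_trans (le_abs_self _) (hC (p s) (hpIcc s))
        rw [h1]
        calc ‖(M (p s)).mulVec (z.1 - y.1)‖
            ≤ (∑ i, ∑ j, |M (p s) i j|) * ‖z.1 - y.1‖ := key _ _
          _ ≤ C * ‖z.1 - y.1‖ := mul_le_mul_of_nonneg_right hCp (norm_nonneg _)
          _ = C * dist y.1 z.1 := by rw [← dist_eq_norm, dist_comm]
          _ ≤ K * dist y z :=
              mul_le_mul hKC hfst dist_nonneg (K.coe_nonneg)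
    set f : ℝ → (Fin 2 → ℝ) × (Fin 2 → ℝ) := fun s => (J s, deriv J s) with hf
    have hf' : ∀ s ∈ Ioo a c, HasDerivAt f (v s (f s)) s ∧ f s ∈ univ := by
      intro s hs
      refine ⟨?_, trivial⟩
      have h1 : HasDerivAt J (deriv J s) s := (hJdiff s).hasDerivAt
      have h2 : HasDerivAt (deriv J) (deriv (deriv J) s) s := (hJ'diff s).hasDerivAt
      have h3 := h1.prodMk h2
      convert h3 using 1
      show (_, _) = (_, _)
      rw [hpeq s (Ioo_subset_Icc_self hs), hJeq s]
    have hg' : ∀ s ∈ Ioo a c,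
        HasDerivAt (fun _ : ℝ => ((0, 0) : (Fin 2 → ℝ) × (Fin 2 → ℝ))) (v s (0, 0)) s ∧
        ((0, 0) : (Fin 2 → ℝ) × (Fin 2 → ℝ)) ∈ univ := by
      intro s hs
      refine ⟨?_, trivial⟩
      have hz : v s (0, 0) = (0, 0) := by
        show (_, _) = (_, _)
        simp [Matrix.mulVec_zero]
      rw [hz]
      exact hasDerivAt_const s _
    have ht0 : t₀ ∈ Ioo a c := by
      constructor
      · rw [ha]; linarith
      · rw [hc]; linarith
    have heq : f t₀ = (0, 0) := by
      show (_, _) = (_, _)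
      rw [h0, hd]
    have huniq := ODE_solution_unique_of_mem_Ioo (fun s _ => hlip s) ht0 hf' hg' heq
    have htmem : t ∈ Ioo a c := by
      have : |t - t₀| < b := by rw [hb]; linarith
      rw [abs_lt] at this
      constructor
      · rw [ha]; linarith [this.1]
      · rw [hc]; linarith [this.2]
    have := huniq htmem
    have := congrArg Prod.fst this
    simpa [f] using this
  · have hder : HasDerivAt J (deriv J t₀) t₀ := (hJdiff t₀).hasDerivAt
    rw [hasDerivAt_iff_tendsto_slope] at hder
    have h1 : ∀ᶠ s in 𝓝[≠] t₀, slope J t₀ s ≠ 0 := hder.eventually_ne hd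
    have h2 : ∀ᶠ s in 𝓝[≠] t₀, J s ≠ 0 := by
      filter_upwards [h1] with s hs
      intro h
      apply hs
      simp [slope_def_module, h, h0]
    rw [eventually_nhdsWithin_iff, Metric.eventually_nhds_iff] at h2
    obtain ⟨δ, hδ, hh⟩ := h2
    refine ⟨δ, hδ, fun s h1' h2' => ?_⟩
    exact hh (show dist s t₀ < δ by rwa [Real.dist_eq]) (sub_ne_zero.mp (abs_pos.mp h1'))
end

section
/- Let M : ℝ → Matrix (Fin 2) (Fin 2) ℝ be continuous with M(t) symmetric for all t, let J₁ : ℝ → ℝ² be a twice continuously differentiable solution of the Jacobi equation J''(t) = −M(t)J(t), and let J₂ : ℝ → ℝ² be continuous. Suppose J₁(t₀) = 0 and the vectors J₁'(t₀) and J₂(t₀) are linearly independent. Then the bracket [J₁,J₂] changes sign at t₀: there exists δ > 0 such that [J₁,J₂](s) · [J₁,J₂](t) < 0 whenever t₀ − δ < s < t₀ < t < t₀ + δ. (The area of the Jacobi ellipse has a simple zero and changes sign at a non-umbilic conjugate point.) -/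
/-- The area of the Jacobi ellipse changes sign at a non-umbilic conjugate point:
if `J₁` is a C² solution of the Jacobi equation `J'' = -M(t)J` (with `M`
continuous and symmetric), `J₂` is continuous, `J₁ t₀ = 0`, and `J₁'(t₀)` and
`J₂ t₀` are linearly independent, then the bracket `[J₁,J₂]` takes opposite
signs just before and just after `t₀`. -/
theorem bracket_changes_sign_at_conjugate_point
    (M : ℝ → Matrix (Fin 2) (Fin 2) ℝ) (hM : Continuous M)
    (hMsymm : ∀ t, (M t).IsSymm)
    (J₁ J₂ : ℝ → Fin 2 → ℝ)
    (hJ₁ : ContDiff ℝ 2 J₁)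
    (hJ₁eq : ∀ t, deriv (deriv J₁) t = -((M t).mulVec (J₁ t)))
    (hJ₂ : Continuous J₂)
    (t₀ : ℝ) (hJ₁0 : J₁ t₀ = 0)
    (hind : LinearIndependent ℝ ![deriv J₁ t₀, J₂ t₀]) :
    ∃ δ > 0, ∀ s t : ℝ, t₀ - δ < s → s < t₀ → t₀ < t → t < t₀ + δ →
      bracket J₁ J₂ s * bracket J₁ J₂ t < 0 := by
  set u := deriv J₁ t₀ with hu
  set v := J₂ t₀ with hv
  set c := u 0 * v 1 - v 0 * u 1 with hcdef
  have hc : c ≠ 0 := by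
    have h2 : LinearIndependent ℝ (Matrix.row (Matrix.of ![u, v])) := hind
    rw [Matrix.linearIndependent_rows_iff_isUnit] at h2
    have hd : (Matrix.of ![u, v]).det ≠ 0 := (Matrix.isUnit_iff_isUnit_det _).mp h2 |>.ne_zero
    rw [Matrix.det_fin_two] at hd
    simp only [Matrix.of_apply] at hd
    intro hh
    apply hd
    simp only [Matrix.cons_val', Matrix.cons_val_zero, Matrix.cons_val_one, Matrix.head_cons,
      Matrix.empty_val', Matrix.cons_val_fin_one, Matrix.head_fin_const]
    linarith [hh]
  -- the quotient function
  set H : ℝ → ℝ := fun t => slope J₁ t₀ t 0 * J₂ t 1 - J₂ t 0 * slope J₁ t₀ t 1 with hH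
  have hderiv : HasDerivAt J₁ u t₀ :=
    ((hJ₁.differentiable (by norm_num)) t₀).hasDerivAt
  have hslope : Filter.Tendsto (slope J₁ t₀) (nhdsWithin t₀ {t₀}ᶜ) (nhds u) :=
    hasDerivAt_iff_tendsto_slope.mp hderiv
  have h0 : Filter.Tendsto (fun t => slope J₁ t₀ t 0) (nhdsWithin t₀ {t₀}ᶜ) (nhds (u 0)) :=
    ((continuous_apply (0 : Fin 2)).tendsto u).comp hslope
  have h1 : Filter.Tendsto (fun t => slope J₁ t₀ t 1) (nhdsWithin t₀ {t₀}ᶜ) (nhds (u 1)) :=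
    ((continuous_apply (1 : Fin 2)).tendsto u).comp hslope
  have g0 : Filter.Tendsto (fun t => J₂ t 0) (nhdsWithin t₀ {t₀}ᶜ) (nhds (v 0)) :=
    (((continuous_apply (0 : Fin 2)).comp hJ₂).tendsto t₀).mono_left nhdsWithin_le_nhds
  have g1 : Filter.Tendsto (fun t => J₂ t 1) (nhdsWithin t₀ {t₀}ᶜ) (nhds (v 1)) :=
    (((continuous_apply (1 : Fin 2)).comp hJ₂).tendsto t₀).mono_left nhdsWithin_le_nhds
  have hHt : Filter.Tendsto H (nhdsWithin t₀ {t₀}ᶜ) (nhds c) := (h0.mul g1).sub (g0.mul h1)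
  have hopen : ∀ᶠ x in nhds c, x * c > 0 := by
    have : IsOpen {x : ℝ | x * c > 0} := isOpen_lt continuous_const (continuous_id.mul continuous_const)
    exact this.eventually_mem (mul_self_pos.mpr hc)
  have key : ∀ᶠ t in nhdsWithin t₀ {t₀}ᶜ, H t * c > 0 := hHt.eventually hopen
  rw [eventually_nhdsWithin_iff, Metric.eventually_nhds_iff] at key
  obtain ⟨δ, hδ, hball⟩ := key
  refine ⟨δ, hδ, fun s t hs1 hs2 ht1 ht2 => ?_⟩
  have hbr : ∀ x : ℝ, x ≠ t₀ → bracket J₁ J₂ x = (x - t₀) * H x := by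
    intro x hx
    have hx' : x - t₀ ≠ 0 := sub_ne_zero.mpr hx
    simp only [hH, bracket, slope, hJ₁0, vsub_eq_sub, Pi.sub_apply, Pi.zero_apply, sub_zero,
      Pi.smul_apply, smul_eq_mul]
    field_simp
  have hs : s ≠ t₀ := ne_of_lt hs2
  have ht : t ≠ t₀ := ne_of_gt ht1
  have hds : dist s t₀ < δ := by rw [Real.dist_eq]; rw [abs_lt]; constructor <;> linarith
  have hdt : dist t t₀ < δ := by rw [Real.dist_eq]; rw [abs_lt]; constructor <;> linarith
  have hHs : H s * c > 0 := hball hds hs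
  have hHt' : H t * c > 0 := hball hdt ht
  rw [hbr s hs, hbr t ht]
  have hcc : c * c > 0 := mul_self_pos.mpr hc
  have hst : 0 < H s * H t := by nlinarith [mul_pos hHs hHt', hcc]
  have hneg : (s - t₀) * (t - t₀) < 0 :=
    mul_neg_of_neg_of_pos (by linarith) (by linarith)
  nlinarith [mul_neg_of_neg_of_pos hneg hst]
end
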